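/- Let I and J be finite sets, R ⊆ I × J, and N ∈ ℕ such that for every i ∈ I the set {j : (i,j) ∈ R} has at most N elements and for every j ∈ J the set {i : (i,j) ∈ R} has at most N elements. Let p₁, p₂ ≥ 0 with p₁ + p₂ = 2, and let (x_i)_{i∈I} and (y_j)_{j∈J} be real numbers. Then Σ_{(i,j)∈R} |x_i|^{p₁} |y_j|^{p₂} ≤ N · ( Σ_{i∈I} x_i² + Σ_{j∈J} y_j² ). -/
import Mathlib


/-- If `R ⊆ I × J` is a relation between finite sets in which every `i ∈ I` is
related to at most `N` elements of `J` and every `j ∈ J` to at most `N` elements of `I`, and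
`p₁, p₂ ≥ 0` with `p₁ + p₂ = 2`, then
`Σ_{(i,j) ∈ R} |x_i|^{p₁} |y_j|^{p₂} ≤ N (Σ_{i ∈ I} x_i² + Σ_{j ∈ J} y_j²)`. -/
theorem stmt_7 {ι κ : Type*} [DecidableEq ι] [DecidableEq κ]
    (I : Finset ι) (J : Finset κ) (R : Finset (ι × κ)) (hR : R ⊆ I ×ˢ J)
    (N : ℕ)
    (hrow : ∀ i ∈ I, (R.filter fun q => q.1 = i).card ≤ N)
    (hcol : ∀ j ∈ J, (R.filter fun q => q.2 = j).card ≤ N)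
    (p₁ p₂ : ℝ) (hp₁ : 0 ≤ p₁) (hp₂ : 0 ≤ p₂) (hps : p₁ + p₂ = 2)
    (x : ι → ℝ) (y : κ → ℝ) :
    ∑ q ∈ R, |x q.1| ^ p₁ * |y q.2| ^ p₂ ≤
      (N : ℝ) * (∑ i ∈ I, x i ^ 2 + ∑ j ∈ J, y j ^ 2) := by
  have key : ∀ q ∈ R, |x q.1| ^ p₁ * |y q.2| ^ p₂ ≤ x q.1 ^ 2 + y q.2 ^ 2 := by
    intro q _
    set a := |x q.1| with ha
    set b := |y q.2| with hb
    have ha0 : 0 ≤ a := abs_nonneg _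
    have hb0 : 0 ≤ b := abs_nonneg _
    have hxa : x q.1 ^ 2 = a ^ 2 := (sq_abs _).symm
    have hyb : y q.2 ^ 2 = b ^ 2 := (sq_abs _).symm
    rw [hxa, hyb]
    rcases le_total a b with h | h
    · calc a ^ p₁ * b ^ p₂ ≤ b ^ p₁ * b ^ p₂ := by
            gcongr
        _ = b ^ (p₁ + p₂) := (Real.rpow_add_of_nonneg hb0 hp₁ hp₂).symm
        _ = b ^ 2 := by rw [hps]; rw [show ((2:ℝ) : ℝ) = ((2:ℕ) : ℝ) by norm_num,
            Real.rpow_natCast]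
        _ ≤ a ^ 2 + b ^ 2 := le_add_of_nonneg_left (sq_nonneg _)
    · calc a ^ p₁ * b ^ p₂ ≤ a ^ p₁ * a ^ p₂ := by
            gcongr
        _ = a ^ (p₁ + p₂) := (Real.rpow_add_of_nonneg ha0 hp₁ hp₂).symm
        _ = a ^ 2 := by rw [hps]; rw [show ((2:ℝ) : ℝ) = ((2:ℕ) : ℝ) by norm_num,
            Real.rpow_natCast]
        _ ≤ a ^ 2 + b ^ 2 := le_add_of_nonneg_right (sq_nonneg _)
  calc ∑ q ∈ R, |x q.1| ^ p₁ * |y q.2| ^ p₂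
      ≤ ∑ q ∈ R, (x q.1 ^ 2 + y q.2 ^ 2) := Finset.sum_le_sum key
    _ = ∑ q ∈ R, x q.1 ^ 2 + ∑ q ∈ R, y q.2 ^ 2 := Finset.sum_add_distrib
    _ ≤ (N : ℝ) * ∑ i ∈ I, x i ^ 2 + (N : ℝ) * ∑ j ∈ J, y j ^ 2 := by
        gcongr ?_ + ?_
        · have h1 : ∑ q ∈ R, x q.1 ^ 2 =
              ∑ i ∈ I, ∑ q ∈ R.filter (fun q => q.1 = i), x q.1 ^ 2 :=
            (Finset.sum_fiberwise_of_maps_to (fun q hq => (Finset.mem_product.mp (hR hq)).1)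
              (fun q => x q.1 ^ 2)).symm
          rw [h1, Finset.mul_sum]
          refine Finset.sum_le_sum fun i hi => ?_
          have : ∑ q ∈ R.filter (fun q => q.1 = i), x q.1 ^ 2 =
              (R.filter (fun q => q.1 = i)).card • (x i ^ 2) := by
            rw [Finset.sum_congr rfl fun q hq => by
              rw [(Finset.mem_filter.mp hq).2], Finset.sum_const]
          rw [this, nsmul_eq_mul]
          have := hrow i hi
          gcongr
        · have h1 : ∑ q ∈ R, y q.2 ^ 2 =
              ∑ j ∈ J, ∑ q ∈ R.filter (fun q => q.2 = j), y q.2 ^ 2 :=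
            (Finset.sum_fiberwise_of_maps_to (fun q hq => (Finset.mem_product.mp (hR hq)).2)
              (fun q => y q.2 ^ 2)).symm
          rw [h1, Finset.mul_sum]
          refine Finset.sum_le_sum fun j hj => ?_
          have : ∑ q ∈ R.filter (fun q => q.2 = j), y q.2 ^ 2 =
              (R.filter (fun q => q.2 = j)).card • (y j ^ 2) := by
            rw [Finset.sum_congr rfl fun q hq => by
              rw [(Finset.mem_filter.mp hq).2], Finset.sum_const]
          rw [this, nsmul_eq_mul]
          have := hcol j hj
          gcongr
    _ = (N : ℝ) * (∑ i ∈ I, x i ^ 2 + ∑ j ∈ J, y j ^ 2) := (mul_add _ _ _).symm
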